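/- Let q be a prime power and n, k positive integers with n/k ≥ 2. Let A ⊆ {1, 2, …, k, n−k, …, n−1} with A ∩ {k, n−k} ≠ ∅, and write n ≡ r (mod k) with 0 ≤ r < k. If r ≠ 0, then the maximum size A_q(n, A) of an (n, A)_q optimum distance flag code satisfies A_q(n, A) ≤ (q^n − q^r)/(q^k − 1) − ⌊(√(4q^k(q^k − q^r) + 1) − (2q^k − 2q^r + 1))/2⌋ − 1. -/

import Mathlib

set_option maxHeartbeats 1000000


open Module

/-- The subspace distance `d_S(U,V) = dim U + dim V - 2 dim (U ⊓ V)`. -/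
noncomputable def subDist {F : Type*} [Field F] {n : ℕ}
    (U V : Submodule F (Fin n → F)) : ℕ :=
  finrank F U + finrank F V - 2 * finrank F (U ⊓ V : Submodule F (Fin n → F))

/-- A flag on `F^n` whose sequence of dimensions is the increasing enumeration of
the finite set `A`: a family of subspaces indexed by `A`, with `dim (𝓕 a) = a`,
forming a strictly increasing chain. -/
def IsFlagOfSet {F : Type*} [Field F] (n : ℕ) (A : Finset ℕ)
    (𝓕 : A → Submodule F (Fin n → F)) : Prop :=
  (∀ a : A, finrank F (𝓕 a) = (a : ℕ)) ∧
    ∀ a b : A, (a : ℕ) < (b : ℕ) → 𝓕 a < 𝓕 b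

/-- The flag distance `d_f(𝓕,𝓕') = ∑ a, d_S(𝓕 a, 𝓕' a)`. -/
noncomputable def flagDistSet {F : Type*} [Field F] {n : ℕ} {A : Finset ℕ}
    (𝓕 𝓕' : A → Submodule F (Fin n → F)) : ℕ :=
  ∑ a, subDist (𝓕 a) (𝓕' a)

/-- The minimum flag distance of a flag code `C`. -/
noncomputable def minFlagDistSet {F : Type*} [Field F] {n : ℕ} {A : Finset ℕ}
    (C : Set (A → Submodule F (Fin n → F))) : ℕ :=
  sInf {d | ∃ 𝓕 ∈ C, ∃ 𝓕' ∈ C, 𝓕 ≠ 𝓕' ∧ d = flagDistSet 𝓕 𝓕'}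

/-- An `(n, A)_q` optimum distance flag code: a non-empty set of flags of type given
by the increasing enumeration of `A` whose minimum flag distance attains the maximum
possible value `2(∑_{a ≤ ⌊n/2⌋} a + ∑_{a > ⌊n/2⌋} (n - a))`. -/
def IsODFC {F : Type*} [Field F] (n : ℕ) (A : Finset ℕ)
    (C : Set (A → Submodule F (Fin n → F))) : Prop :=
  C.Nonempty ∧ (∀ 𝓕 ∈ C, IsFlagOfSet n A 𝓕) ∧
    minFlagDistSet C =
      2 * ((∑ a ∈ A.filter (fun a => a ≤ n / 2), a) +
        ∑ a ∈ A.filter (fun a => n / 2 < a), (n - a))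

/-- `finrank` of the dual annihilator. -/
private lemma finrank_dualAnnihilator_aux {F V : Type*} [Field F] [AddCommGroup V] [Module F V]
    [FiniteDimensional F V] (W : Submodule F V) :
    finrank F W.dualAnnihilator + finrank F W = finrank F V := by
  have h1 := LinearEquiv.finrank_eq (R := F) (M := V ⧸ W)
    (N := { x // x ∈ W.dualAnnihilator }) (Subspace.quotEquivAnnihilator W)
  have h2 := Submodule.finrank_quotient_add_finrank W
  omega

/-- The Drake–Freeman bound for partial `k`-spreads, proved by a second-moment
argument over the nonzero linear functionals. -/
private lemma spread_bound {F : Type*} [Field F] [Fintype F] {V : Type*} [AddCommGroup V]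
    [Module F V] [Finite V] [FiniteDimensional F V] (q n k : ℕ)
    (hq : Fintype.card F = q) (hV : finrank F V = n) (hk : 0 < k) (h2k : 2 * k ≤ n)
    (hr0 : n % k ≠ 0)
    (S : Finset (Submodule F V)) (hSne : S.Nonempty)
    (hdim : ∀ W ∈ S, finrank F W = k)
    (hdisj : ∀ W ∈ S, ∀ W' ∈ S, W ≠ W' → W ⊓ W' = ⊥) :
    (S.card : ℝ) ≤ ((q : ℝ) ^ n - (q : ℝ) ^ (n % k)) / ((q : ℝ) ^ k - 1)
      - (⌊(Real.sqrt (4 * (q : ℝ) ^ k * ((q : ℝ) ^ k - (q : ℝ) ^ (n % k)) + 1)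
          - (2 * (q : ℝ) ^ k - 2 * (q : ℝ) ^ (n % k) + 1)) / 2⌋ : ℝ) - 1 := by
  classical
  haveI : Fintype V := Fintype.ofFinite V
  haveI : Finite (Module.Dual F V) :=
    Finite.of_injective (fun φ => (φ : V → F)) DFunLike.coe_injective
  haveI : Fintype (Module.Dual F V) := Fintype.ofFinite _
  have hq2 : 2 ≤ q := hq ▸ Fintype.one_lt_card
  set r := n % k with hrdef
  have hrk : r < k := Nat.mod_lt n hk
  have hr1 : 1 ≤ r := Nat.one_le_iff_ne_zero.2 hr0
  set t := n / k with htdef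
  have hnt : n = k * t + r := (Nat.div_add_mod n k).symm
  have ht2 : 2 ≤ t := (Nat.le_div_iff_mul_le hk).2 (by omega)
  have hktt : k * 2 ≤ k * t := Nat.mul_le_mul_left k ht2
  have hkt1 : k * (t - 1) + k = k * t := by
    rw [← Nat.mul_succ]
    congr 1
    omega
  have hkn : 2 * k ≤ n := h2k
  -- the counting function over nonzero functionals
  set Φ : Finset (Module.Dual F V) := Finset.univ.erase 0 with hΦdef
  have hcount : ∀ W : Submodule F V,
      (Φ.filter (fun φ => W ≤ LinearMap.ker φ)).card = q ^ (n - finrank F W) - 1 := by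
    intro W
    have hann : ∀ φ : Module.Dual F V, (W ≤ LinearMap.ker φ) ↔ φ ∈ W.dualAnnihilator := by
      intro φ
      rw [Submodule.mem_dualAnnihilator]
      constructor
      · intro h w hw; exact (LinearMap.mem_ker (f := φ)).1 (h hw)
      · intro h v hv; exact (LinearMap.mem_ker (f := φ)).2 (h v hv)
    have h0 : (0 : Module.Dual F V) ∈
        Finset.univ.filter (fun φ => W ≤ LinearMap.ker φ) := by
      refine Finset.mem_filter.2 ⟨Finset.mem_univ _, ?_⟩
      intro v _
      exact LinearMap.mem_ker.2 rfl
    have hfull : (Finset.univ.filter (fun φ : Module.Dual F V => W ≤ LinearMap.ker φ)).card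
        = q ^ (n - finrank F W) := by
      have hc1 : (Finset.univ.filter (fun φ : Module.Dual F V => W ≤ LinearMap.ker φ)).card
          = Fintype.card {φ : Module.Dual F V // W ≤ LinearMap.ker φ} :=
        (Fintype.card_subtype _).symm
      have hc2 : Fintype.card {φ : Module.Dual F V // W ≤ LinearMap.ker φ}
          = Fintype.card W.dualAnnihilator :=
        Fintype.card_congr (Equiv.subtypeEquivRight hann)
      have hc3 : Fintype.card W.dualAnnihilator = q ^ finrank F W.dualAnnihilator := by
        rw [card_eq_pow_finrank (K := F) (V := W.dualAnnihilator), hq]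
      have hc4 : finrank F W.dualAnnihilator = n - finrank F W := by
        have h1 := finrank_dualAnnihilator_aux W
        have h2 : finrank F W ≤ finrank F V := Submodule.finrank_le W
        omega
      rw [hc1, hc2, hc3, hc4]
    rw [hΦdef, Finset.filter_erase, Finset.card_erase_of_mem h0, hfull]
  set m := S.card with hmdef
  have hm1 : 1 ≤ m := Finset.card_pos.2 hSne
  set b : Module.Dual F V → ℕ := fun φ => (S.filter (fun W => W ≤ LinearMap.ker φ)).card
    with hbdef
  -- first moment
  have hb1 : ∑ φ ∈ Φ, b φ = m * (q ^ (n - k) - 1) := by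
    have h1 : ∀ φ ∈ Φ, b φ = ∑ W ∈ S, if W ≤ LinearMap.ker φ then 1 else 0 :=
      fun φ _ => Finset.card_filter _ _
    rw [Finset.sum_congr rfl h1, Finset.sum_comm]
    have h2 : ∀ W ∈ S, (∑ φ ∈ Φ, if W ≤ LinearMap.ker φ then 1 else 0)
        = q ^ (n - k) - 1 := by
      intro W hW
      rw [← Finset.card_filter, hcount W, hdim W hW]
    rw [Finset.sum_congr rfl h2, Finset.sum_const, smul_eq_mul]
  -- second moment
  have hb2 : ∑ φ ∈ Φ, b φ * b φ
      = m * (q ^ (n - k) - 1) + m * (m - 1) * (q ^ (n - 2 * k) - 1) := by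
    have hbb : ∀ φ ∈ Φ, b φ * b φ
        = ∑ W ∈ S, ∑ W' ∈ S, if W ⊔ W' ≤ LinearMap.ker φ then 1 else 0 := by
      intro φ _
      show (S.filter _).card * (S.filter _).card = _
      rw [Finset.card_filter, Finset.sum_mul_sum]
      refine Finset.sum_congr rfl fun W _ => Finset.sum_congr rfl fun W' _ => ?_
      by_cases h1 : W ≤ LinearMap.ker φ <;> by_cases h2 : W' ≤ LinearMap.ker φ <;>
        simp [h1, h2, sup_le_iff]
    rw [Finset.sum_congr rfl hbb, Finset.sum_comm]
    have hinner : ∀ W ∈ S, (∑ φ ∈ Φ, ∑ W' ∈ S, if W ⊔ W' ≤ LinearMap.ker φ then 1 else 0)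
        = (q ^ (n - k) - 1) + (m - 1) * (q ^ (n - 2 * k) - 1) := by
      intro W hW
      rw [Finset.sum_comm]
      have hterm : ∀ W' ∈ S, (∑ φ ∈ Φ, if W ⊔ W' ≤ LinearMap.ker φ then 1 else 0)
          = q ^ (n - finrank F (W ⊔ W' : Submodule F V)) - 1 := by
        intro W' _
        rw [← Finset.card_filter, hcount]
      rw [Finset.sum_congr rfl hterm, ← Finset.add_sum_erase _ _ hW]
      have hd : q ^ (n - finrank F (W ⊔ W : Submodule F V)) - 1 = q ^ (n - k) - 1 := by
        rw [sup_idem, hdim W hW]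
      have hoff : ∀ W' ∈ S.erase W,
          q ^ (n - finrank F (W ⊔ W' : Submodule F V)) - 1 = q ^ (n - 2 * k) - 1 := by
        intro W' hW'
        have hne : W ≠ W' := (Finset.ne_of_mem_erase hW').symm
        have hW'S : W' ∈ S := Finset.mem_of_mem_erase hW'
        have hsup : finrank F (W ⊔ W' : Submodule F V) = 2 * k := by
          have h1 := Submodule.finrank_sup_add_finrank_inf_eq W W'
          rw [hdisj W hW W' hW'S hne, hdim W hW, hdim W' hW'S, finrank_bot] at h1
          omega
        rw [hsup]
      rw [hd, Finset.sum_congr rfl hoff, Finset.sum_const, smul_eq_mul,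
        Finset.card_erase_of_mem hW]
    rw [Finset.sum_congr rfl hinner, Finset.sum_const, smul_eq_mul, Nat.mul_add, ← mul_assoc]
  have hΦcard : Φ.card = q ^ n - 1 := by
    rw [hΦdef, Finset.card_erase_of_mem (Finset.mem_univ _), Finset.card_univ,
      card_eq_pow_finrank (K := F) (V := Module.Dual F V), hq, Subspace.dual_finrank_eq, hV]
  -- the trivial covering bound
  have hcover : m * (q ^ k - 1) ≤ q ^ n - 1 := by
    have hWcard : ∀ W ∈ S, (((W : Set V).toFinset).erase 0).card = q ^ k - 1 := by
      intro W hW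
      rw [Finset.card_erase_of_mem (by simp [Set.mem_toFinset]), Set.toFinset_card]
      have : Fintype.card (W : Set V) = q ^ k := by
        rw [show Fintype.card (W : Set V) = Fintype.card W from rfl,
          card_eq_pow_finrank (K := F) (V := W), hq, hdim W hW]
      rw [this]
    have hdisjF : ∀ W ∈ S, ∀ W' ∈ S, W ≠ W' →
        Disjoint (((W : Set V).toFinset).erase 0) (((W' : Set V).toFinset).erase 0) := by
      intro W hW W' hW' hne
      rw [Finset.disjoint_left]
      intro v hv hv'
      simp only [Finset.mem_erase, Set.mem_toFinset, SetLike.mem_coe] at hv hv'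
      have hmem : v ∈ W ⊓ W' := ⟨hv.2, hv'.2⟩
      rw [hdisj W hW W' hW' hne] at hmem
      exact hv.1 (by simpa using hmem)
    calc m * (q ^ k - 1)
        = ∑ W ∈ S, (((W : Set V).toFinset).erase 0).card := by
          rw [Finset.sum_congr rfl hWcard, Finset.sum_const, smul_eq_mul]
      _ = (S.biUnion (fun W => ((W : Set V).toFinset).erase 0)).card :=
          (Finset.card_biUnion hdisjF).symm
      _ ≤ (Finset.univ.erase (0 : V)).card := by
          refine Finset.card_le_card ?_
          intro v hv
          simp only [Finset.mem_biUnion] at hv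
          obtain ⟨W, _, hv⟩ := hv
          simp only [Finset.mem_erase, Set.mem_toFinset] at hv
          exact Finset.mem_erase.2 ⟨hv.1, Finset.mem_univ v⟩
      _ = q ^ n - 1 := by
          rw [Finset.card_erase_of_mem (Finset.mem_univ _), Finset.card_univ,
            card_eq_pow_finrank (K := F) (V := V), hq, hV]
  -- pass to the integers
  set x : ℤ := (q : ℤ) ^ r with hxdef
  set y : ℤ := (q : ℤ) ^ k with hydef
  set z : ℤ := (q : ℤ) ^ (n - 2 * k) with hzdef
  have hx2 : (2 : ℤ) ≤ x := by
    calc (2 : ℤ) ≤ (q : ℤ) := by exact_mod_cast hq2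
      _ = (q : ℤ) ^ 1 := (pow_one _).symm
      _ ≤ x := pow_le_pow_right₀ (by exact_mod_cast hq2.trans' one_le_two) hr1
  have hxy : x + 1 ≤ y := by
    have : x < y := pow_lt_pow_right₀ (by exact_mod_cast hq2) hrk
    omega
  have hzx : x ≤ z := pow_le_pow_right₀ (by exact_mod_cast hq2.trans' one_le_two) (by omega)
  have hz2 : (2 : ℤ) ≤ z := le_trans hx2 hzx
  have epown : ((q : ℤ)) ^ n = z * y * y := by
    rw [hzdef, hydef, ← pow_add, ← pow_add]
    congr 1
    omega
  have epownk : ((q : ℤ)) ^ (n - k) = z * y := by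
    rw [hzdef, hydef, ← pow_add]
    congr 1
    omega
  set M : ℕ := q ^ r * ∑ i ∈ Finset.range t, (q ^ k) ^ i with hMdef
  set M2 : ℕ := q ^ r * ∑ i ∈ Finset.range (t - 1), (q ^ k) ^ i with hM2def
  have hMcast : (M : ℤ) = x * ∑ i ∈ Finset.range t, y ^ i := by
    rw [hMdef, hxdef, hydef]; push_cast; ring
  have hM2cast : (M2 : ℤ) = x * ∑ i ∈ Finset.range (t - 1), y ^ i := by
    rw [hM2def, hxdef, hydef]; push_cast; ring
  have hMy : (M : ℤ) * (y - 1) = z * y * y - x := by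
    have hgeo : (∑ i ∈ Finset.range t, y ^ i) * (y - 1) = y ^ t - 1 := geom_sum_mul y t
    have hpow : x * y ^ t = z * y * y := by
      rw [hxdef, hydef, hzdef, ← pow_mul, ← pow_add, ← pow_add, ← pow_add]
      congr 1
      omega
    calc (M : ℤ) * (y - 1) = x * ((∑ i ∈ Finset.range t, y ^ i) * (y - 1)) := by
            rw [hMcast]; ring
      _ = x * (y ^ t - 1) := by rw [hgeo]
      _ = x * y ^ t - x := by ring
      _ = z * y * y - x := by rw [hpow]
  have hM2y : (M2 : ℤ) * (y - 1) = z * y - x := by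
    have hgeo : (∑ i ∈ Finset.range (t - 1), y ^ i) * (y - 1) = y ^ (t - 1) - 1 :=
      geom_sum_mul y (t - 1)
    have hpow : x * y ^ (t - 1) = z * y := by
      rw [hxdef, hydef, hzdef, ← pow_mul, ← pow_add, ← pow_add]
      congr 1
      omega
    calc (M2 : ℤ) * (y - 1) = x * ((∑ i ∈ Finset.range (t - 1), y ^ i) * (y - 1)) := by
            rw [hM2cast]; ring
      _ = x * (y ^ (t - 1) - 1) := by rw [hgeo]
      _ = x * y ^ (t - 1) - x := by ring
      _ = z * y - x := by rw [hpow]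
  -- the fundamental inequality ∑ (bφ - M2)(bφ - M2 - 1) ≥ 0
  have hstep : ∀ φ ∈ Φ, (0 : ℤ) ≤ ((b φ : ℤ) - M2) * ((b φ : ℤ) - M2 - 1) := by
    intro φ _
    rcases le_or_gt ((b φ : ℤ) - M2) 0 with h | h
    · have h' : (b φ : ℤ) - M2 - 1 ≤ 0 := by omega
      have := mul_nonneg (neg_nonneg.2 h) (neg_nonneg.2 h')
      rwa [neg_mul_neg] at this
    · exact mul_nonneg (by omega) (by omega)
  have hTnn : (0 : ℤ) ≤ ∑ φ ∈ Φ, ((b φ : ℤ) - M2) * ((b φ : ℤ) - M2 - 1) :=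
    Finset.sum_nonneg hstep
  have hexp : ∑ φ ∈ Φ, ((b φ : ℤ) - M2) * ((b φ : ℤ) - M2 - 1)
      = (∑ φ ∈ Φ, (b φ : ℤ) * (b φ : ℤ))
        - (2 * (M2 : ℤ) + 1) * (∑ φ ∈ Φ, (b φ : ℤ))
        + ((M2 : ℤ) * (M2 : ℤ) + (M2 : ℤ)) * (Φ.card : ℤ) := by
    have h1 : ∀ φ ∈ Φ, ((b φ : ℤ) - M2) * ((b φ : ℤ) - M2 - 1)
        = ((b φ : ℤ) * (b φ : ℤ) - (2 * (M2 : ℤ) + 1) * (b φ : ℤ))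
          + ((M2 : ℤ) * (M2 : ℤ) + (M2 : ℤ)) := fun φ _ => by ring
    rw [Finset.sum_congr rfl h1, Finset.sum_add_distrib, Finset.sum_sub_distrib,
      ← Finset.mul_sum, Finset.sum_const, nsmul_eq_mul, mul_comm ((Φ.card : ℤ))]
  -- cast the moment identities
  have honeq : 1 ≤ q ^ (n - k) := Nat.one_le_pow _ _ (by omega)
  have honeq2 : 1 ≤ q ^ (n - 2 * k) := Nat.one_le_pow _ _ (by omega)
  have honeqn : 1 ≤ q ^ n := Nat.one_le_pow _ _ (by omega)
  have hc1 : (∑ φ ∈ Φ, (b φ : ℤ)) = (m : ℤ) * (z * y - 1) := by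
    zify [honeq] at hb1
    rw [epownk] at hb1
    exact hb1
  have hc2 : (∑ φ ∈ Φ, (b φ : ℤ) * (b φ : ℤ))
      = (m : ℤ) * (z * y - 1) + (m : ℤ) * ((m : ℤ) - 1) * (z - 1) := by
    zify [honeq, honeq2, hm1] at hb2
    rw [epownk, ← hzdef] at hb2
    exact hb2
  have hcΦ : ((Φ.card : ℕ) : ℤ) = z * y * y - 1 := by
    zify [honeqn] at hΦcard
    rw [epown] at hΦcard
    exact hΦcard
  -- the big inequality
  have hG : (0 : ℤ) ≤ ((m : ℤ) * (z * y - 1) + (m : ℤ) * ((m : ℤ) - 1) * (z - 1))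
      - (2 * (M2 : ℤ) + 1) * ((m : ℤ) * (z * y - 1))
      + ((M2 : ℤ) * (M2 : ℤ) + (M2 : ℤ)) * (z * y * y - 1) := by
    have h0 := hTnn
    rw [hexp, hc1, hc2, hcΦ] at h0
    linarith only [h0]
  set s : ℤ := (M : ℤ) - (m : ℤ) with hsdef
  have hs0 : 0 ≤ s := by
    have hmq : (m : ℤ) * (y - 1) ≤ z * y * y - 1 := by
      have honek : 1 ≤ q ^ k := Nat.one_le_pow _ _ (by omega)
      zify [honek, honeqn] at hcover
      rw [epown, ← hydef] at hcover
      exact hcover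
    by_contra hneg
    push_neg at hneg
    have h1 : (M : ℤ) + 1 ≤ (m : ℤ) := by omega
    have h2 : ((M : ℤ) + 1) * (y - 1) ≤ (m : ℤ) * (y - 1) :=
      mul_le_mul_of_nonneg_right h1 (by omega)
    rw [add_mul, hMy, one_mul] at h2
    omega
  have hveq : (m : ℤ) * (y - 1) = z * y * y - x - s * (y - 1) := by
    have : (m : ℤ) = (M : ℤ) - s := by omega
    rw [this, sub_mul, hMy]
  -- the key algebraic consequence
  have hbig : (0 : ℤ) ≤ z * ((s + y - x) * (s + y - x + 1) - y * (y - x)) - s * (s + 1) := by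
    have e1 : (y - 1) ^ 2 * (((m : ℤ) * (z * y - 1) + (m : ℤ) * ((m : ℤ) - 1) * (z - 1))
        - (2 * (M2 : ℤ) + 1) * ((m : ℤ) * (z * y - 1))
        + ((M2 : ℤ) * (M2 : ℤ) + (M2 : ℤ)) * (z * y * y - 1))
        = (z * y * y - 1) * ((M2 : ℤ) * (y - 1)) ^ 2
          + (z * y * y - 1) * ((M2 : ℤ) * (y - 1)) * (y - 1)
          - (2 * ((M2 : ℤ) * (y - 1)) + (y - 1)) * ((m : ℤ) * (y - 1)) * (z * y - 1)
          + ((m : ℤ) * (y - 1)) ^ 2 * (z - 1)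
          - ((m : ℤ) * (y - 1)) * (y - 1) * (z - 1)
          + ((m : ℤ) * (y - 1)) * (y - 1) * (z * y - 1) := by ring
    rw [hM2y, hveq] at e1
    have e2 : (z * y * y - 1) * (z * y - x) ^ 2
          + (z * y * y - 1) * (z * y - x) * (y - 1)
          - (2 * (z * y - x) + (y - 1)) * (z * y * y - x - s * (y - 1)) * (z * y - 1)
          + (z * y * y - x - s * (y - 1)) ^ 2 * (z - 1)
          - (z * y * y - x - s * (y - 1)) * (y - 1) * (z - 1)
          + (z * y * y - x - s * (y - 1)) * (y - 1) * (z * y - 1)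
        = (y - 1) ^ 2 * (z * ((s + y - x) * (s + y - x + 1) - y * (y - x)) - s * (s + 1)) := by
      ring
    rw [e2] at e1
    by_contra hneg
    push_neg at hneg
    have hy1 : (0 : ℤ) < (y - 1) ^ 2 := pow_pos (by omega) 2
    have hlt : (y - 1) ^ 2 * (z * ((s + y - x) * (s + y - x + 1) - y * (y - x)) - s * (s + 1)) < 0 :=
      mul_neg_of_pos_of_neg hy1 hneg
    have hge := mul_nonneg (le_of_lt hy1) hG
    rw [e1] at hge
    linarith only [hlt, hge]
  -- deduce the strict quadratic inequality
  have hs1 : 1 ≤ s := by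
    rcases eq_or_lt_of_le hs0 with h | h
    · exfalso
      rw [← h] at hbig
      have ha : (0 : ℤ) ≤ y - x := by omega
      have hbne : (1 : ℤ) - x ≤ -1 := by omega
      have h1 : ((y - x) * (1 - x)) ≤ (y - x) * (-1) := mul_le_mul_of_nonneg_left hbne ha
      have h1' : (y - x) * (-1) ≤ -1 := by omega
      have h2 : z * ((0 + y - x) * (0 + y - x + 1) - y * (y - x)) = z * ((y - x) * (1 - x)) := by
        ring
      have h3 : z * ((y - x) * (1 - x)) ≤ z * (-1) :=
        mul_le_mul_of_nonneg_left (le_trans h1 h1') (by omega)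
      rw [h2] at hbig
      omega
    · omega
  have hwkey : y * (y - x) + 1 ≤ (s + y - x) * (s + y - x + 1) := by
    by_contra h
    push_neg at h
    have h1 : (s + y - x) * (s + y - x + 1) - y * (y - x) ≤ 0 := by omega
    have h2 : z * ((s + y - x) * (s + y - x + 1) - y * (y - x)) ≤ 0 :=
      mul_nonpos_iff.2 (Or.inl ⟨by omega, h1⟩)
    have h3 : (1 : ℤ) * 2 ≤ s * (s + 1) :=
      mul_le_mul hs1 (by omega) (by omega) (by omega)
    omega
  set w : ℤ := s + y - x with hwdef
  have hw1 : 1 ≤ w := by omega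
  -- real part
  have hxr : ((x : ℤ) : ℝ) = (q : ℝ) ^ r := by rw [hxdef]; push_cast; ring
  have hyr : ((y : ℤ) : ℝ) = (q : ℝ) ^ k := by rw [hydef]; push_cast; ring
  have hzr : ((z : ℤ) : ℝ) = (q : ℝ) ^ (n - 2 * k) := by rw [hzdef]; push_cast; ring
  have hZ : 4 * (y * (y - x)) + 1 < (2 * w + 1) ^ 2 := by
    have hr2 : (2 * w + 1) ^ 2 = 4 * (w * (w + 1)) + 1 := by ring
    rw [hr2]
    have hmono : (s + y - x) * (s + y - x + 1) ≤ w * (w + 1) := by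
      rw [hwdef]
    linarith only [hwkey, hmono]
  have hsq : Real.sqrt (4 * (q : ℝ) ^ k * ((q : ℝ) ^ k - (q : ℝ) ^ r) + 1)
      < 2 * (w : ℝ) + 1 := by
    rw [Real.sqrt_lt' (by positivity)]
    have hcast : ((4 * (y * (y - x)) + 1 : ℤ) : ℝ) < (((2 * w + 1) ^ 2 : ℤ) : ℝ) :=
      Int.cast_lt.2 hZ
    push_cast at hcast
    rw [← hxr, ← hyr]
    linarith only [hcast]
  set θ : ℝ := (Real.sqrt (4 * (q : ℝ) ^ k * ((q : ℝ) ^ k - (q : ℝ) ^ r) + 1)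
      - (2 * (q : ℝ) ^ k - 2 * (q : ℝ) ^ r + 1)) / 2 with hθdef
  have hθs : θ < (s : ℝ) := by
    have hws : ((w : ℤ) : ℝ) = (s : ℝ) + (q : ℝ) ^ k - (q : ℝ) ^ r := by
      rw [hwdef]
      push_cast
      rw [hxr, hyr]
    rw [hθdef]
    rw [hws] at hsq
    linarith only [hsq]
  have hfloor : (⌊θ⌋ : ℤ) < s := by
    have h1 : (⌊θ⌋ : ℝ) ≤ θ := Int.floor_le θ
    exact_mod_cast lt_of_le_of_lt h1 hθs
  -- conclusion
  have hMreal : ((M : ℕ) : ℝ) = ((q : ℝ) ^ n - (q : ℝ) ^ r) / ((q : ℝ) ^ k - 1) := by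
    have hq1R : (1 : ℝ) < (q : ℝ) := by exact_mod_cast Nat.lt_of_lt_of_le Nat.one_lt_two hq2
    have hyne : ((q : ℝ) ^ k - 1) ≠ 0 := by
      have : (1 : ℝ) < (q : ℝ) ^ k := one_lt_pow₀ hq1R (by omega)
      linarith
    rw [eq_div_iff hyne]
    have hcast : ((M : ℕ) : ℝ) * (((y : ℤ) : ℝ) - 1)
        = ((z : ℤ) : ℝ) * ((y : ℤ) : ℝ) * ((y : ℤ) : ℝ) - ((x : ℤ) : ℝ) := by
      exact_mod_cast congrArg (fun a : ℤ => (a : ℝ)) hMy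
    rw [hxr, hyr, hzr] at hcast
    have hqn : (q : ℝ) ^ (n - 2 * k) * (q : ℝ) ^ k * (q : ℝ) ^ k = (q : ℝ) ^ n := by
      rw [← pow_add, ← pow_add]
      congr 1
      omega
    rw [← hqn]
    linear_combination hcast
  have hfinal : ((m : ℕ) : ℝ) ≤ ((M : ℕ) : ℝ) - (⌊θ⌋ : ℝ) - 1 := by
    have h1 : (m : ℤ) ≤ (M : ℤ) - ⌊θ⌋ - 1 := by omega
    exact_mod_cast h1
  rw [hMreal] at hfinal
  exact hfinal

theorem stmt_10 {F : Type*} [Field F] [Fintype F] (q n k r : ℕ)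
    (hq : Fintype.card F = q) (hn : 0 < n) (hk : 0 < k) (hnk : 2 * k ≤ n)
    (A : Finset ℕ)
    (hA : A ⊆ Finset.Icc 1 k ∪ Finset.Icc (n - k) (n - 1))
    (hAk : k ∈ A ∨ n - k ∈ A)
    (hr : n % k = r) (hr0 : r ≠ 0) (hrk : r < k)
    (C : Set (A → Submodule F (Fin n → F))) (hC : IsODFC n A C) :
    (C.ncard : ℝ) ≤ ((q : ℝ) ^ n - (q : ℝ) ^ r) / ((q : ℝ) ^ k - 1)
      - (⌊(Real.sqrt (4 * (q : ℝ) ^ k * ((q : ℝ) ^ k - (q : ℝ) ^ r) + 1)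
          - (2 * (q : ℝ) ^ k - 2 * (q : ℝ) ^ r + 1)) / 2⌋ : ℝ) - 1 := by
  classical
  subst hr
  obtain ⟨hCne, hCflag, hCmin⟩ := hC
  have hq2 : 2 ≤ q := hq ▸ Fintype.one_lt_card
  have hVrank : finrank F (Fin n → F) = n := by
    rw [Module.finrank_pi, Fintype.card_fin]
  have h2k : 2 * k < n := by
    rcases Nat.lt_or_ge (2 * k) n with h | h
    · exact h
    · exfalso
      have hn2k : n = 2 * k := le_antisymm h hnk
      have : n % k = 0 := by
        rw [hn2k]
        exact Nat.mul_mod_left 2 k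
      exact hr0 this
  haveI : Finite (Submodule F (Fin n → F)) :=
    Finite.of_injective (fun W => (W : Set (Fin n → F))) SetLike.coe_injective
  -- the per-coordinate maximal distance
  set g : ℕ → ℕ := fun i => if i ≤ n / 2 then 2 * i else 2 * (n - i) with hgdef
  have hflagdist : ∀ 𝓕 ∈ C, ∀ 𝓕' ∈ C, 𝓕 ≠ 𝓕' → ∀ aa : A,
      subDist (𝓕 aa) (𝓕' aa) = g (aa : ℕ) := by
    intro 𝓕 h𝓕 𝓕' h𝓕' hne aa
    have hub : ∀ a : A, subDist (𝓕 a) (𝓕' a) ≤ g (a : ℕ) := by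
      intro a
      have h1 : finrank F (𝓕 a) = (a : ℕ) := (hCflag 𝓕 h𝓕).1 a
      have h2 : finrank F (𝓕' a) = (a : ℕ) := (hCflag 𝓕' h𝓕').1 a
      have hinf : finrank F ((𝓕 a) ⊓ (𝓕' a) : Submodule F (Fin n → F)) ≤ (a : ℕ) := by
        rw [← h1]
        exact Submodule.finrank_mono inf_le_left
      have hsupinf := Submodule.finrank_sup_add_finrank_inf_eq (𝓕 a) (𝓕' a)
      rw [h1, h2] at hsupinf
      have hsuple : finrank F ((𝓕 a) ⊔ (𝓕' a) : Submodule F (Fin n → F)) ≤ n := by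
        have := Submodule.finrank_le ((𝓕 a) ⊔ (𝓕' a))
        rwa [hVrank] at this
      rw [subDist, h1, h2]
      simp only [hgdef]
      by_cases hcase : (a : ℕ) ≤ n / 2
      · rw [if_pos hcase]
        omega
      · rw [if_neg hcase]
        omega
    have hmem : flagDistSet 𝓕 𝓕' ∈
        {d | ∃ 𝓕 ∈ C, ∃ 𝓕' ∈ C, 𝓕 ≠ 𝓕' ∧ d = flagDistSet 𝓕 𝓕'} :=
      ⟨𝓕, h𝓕, 𝓕', h𝓕', hne, rfl⟩
    have hsinf : minFlagDistSet C ≤ flagDistSet 𝓕 𝓕' := Nat.sInf_le hmem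
    rw [hCmin] at hsinf
    have hDmax : 2 * ((∑ a ∈ A.filter (fun a => a ≤ n / 2), a)
        + ∑ a ∈ A.filter (fun a => n / 2 < a), (n - a)) = ∑ a : A, g (a : ℕ) := by
      rw [Finset.sum_filter, Finset.sum_filter, ← Finset.sum_add_distrib, Finset.mul_sum,
        Finset.sum_coe_sort A g]
      refine Finset.sum_congr rfl fun a _ => ?_
      simp only [hgdef]
      by_cases hcase : a ≤ n / 2
      · have hc2 : ¬ n / 2 < a := by omega
        simp only [if_pos hcase, if_neg hc2]
        omega
      · have hc2 : n / 2 < a := by omega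
        simp only [if_neg hcase, if_pos hc2]
        omega
    rw [hDmax] at hsinf
    have hsinf' : ∑ a : A, g (a : ℕ) ≤ ∑ a : A, subDist (𝓕 a) (𝓕' a) := hsinf
    by_contra hne2
    have hlt : subDist (𝓕 aa) (𝓕' aa) < g (aa : ℕ) := lt_of_le_of_ne (hub aa) hne2
    have : ∑ a : A, subDist (𝓕 a) (𝓕' a) < ∑ a : A, g (a : ℕ) :=
      Finset.sum_lt_sum (fun a _ => hub a) ⟨aa, Finset.mem_univ aa, hlt⟩
    omega
  -- pick the distinguished coordinate
  rcases hAk with hAk | hAk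
  · -- the case k ∈ A : the k-dimensional subspaces form a partial spread
    set aβ : A := ⟨k, hAk⟩ with haβ
    have hgk : g k = 2 * k := by
      simp only [hgdef]
      rw [if_pos (by omega)]
    have hgeo : ∀ 𝓕 ∈ C, ∀ 𝓕' ∈ C, 𝓕 ≠ 𝓕' → (𝓕 aβ) ⊓ (𝓕' aβ) = ⊥ := by
      intro 𝓕 h𝓕 𝓕' h𝓕' hne
      have heq := hflagdist 𝓕 h𝓕 𝓕' h𝓕' hne aβ
      have h1 : finrank F (𝓕 aβ) = k := (hCflag 𝓕 h𝓕).1 aβ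
      have h2 : finrank F (𝓕' aβ) = k := (hCflag 𝓕' h𝓕').1 aβ
      have hinf : finrank F ((𝓕 aβ) ⊓ (𝓕' aβ) : Submodule F (Fin n → F)) ≤ k := by
        rw [← h1]
        exact Submodule.finrank_mono inf_le_left
      rw [subDist, h1, h2] at heq
      have : finrank F ((𝓕 aβ) ⊓ (𝓕' aβ) : Submodule F (Fin n → F)) = 0 := by
        have : g (aβ : ℕ) = 2 * k := hgk
        omega
      exact Submodule.finrank_eq_zero.1 this
    set gmap : (A → Submodule F (Fin n → F)) → Submodule F (Fin n → F) :=
      fun 𝓕 => 𝓕 aβ with hgmap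
    have hinj : Set.InjOn gmap C := by
      intro 𝓕 h𝓕 𝓕' h𝓕' heq
      by_contra hne
      have hbot := hgeo 𝓕 h𝓕 𝓕' h𝓕' hne
      simp only [hgmap] at heq
      rw [heq, inf_idem] at hbot
      have h2 : finrank F (𝓕' aβ) = k := (hCflag 𝓕' h𝓕').1 aβ
      rw [hbot, finrank_bot] at h2
      omega
    set Sset := gmap '' C with hSset
    have hSfin : Sset.Finite := Set.toFinite _
    have hncard : (C.ncard : ℝ) = (hSfin.toFinset.card : ℝ) := by
      rw [← Set.ncard_image_of_injOn hinj, ← hSset, Set.ncard_eq_toFinset_card _ hSfin]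
    rw [hncard]
    have hbound := spread_bound (V := Fin n → F) q n k hq hVrank hk (le_of_lt h2k)
      (by omega) hSfin.toFinset
      (by
        obtain ⟨𝓕, h𝓕⟩ := hCne
        exact ⟨gmap 𝓕, by rw [Set.Finite.mem_toFinset]; exact ⟨𝓕, h𝓕, rfl⟩⟩)
      (by
        intro W hW
        rw [Set.Finite.mem_toFinset] at hW
        obtain ⟨𝓕, h𝓕, rfl⟩ := hW
        exact (hCflag 𝓕 h𝓕).1 aβ)
      (by
        intro W hW W' hW' hne
        rw [Set.Finite.mem_toFinset] at hW hW'
        obtain ⟨𝓕, h𝓕, rfl⟩ := hW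
        obtain ⟨𝓕', h𝓕', rfl⟩ := hW'
        exact hgeo 𝓕 h𝓕 𝓕' h𝓕' (fun h => hne (by rw [h])))
    exact hbound
  · -- the case n - k ∈ A : pass to dual annihilators
    set aβ : A := ⟨n - k, hAk⟩ with haβ
    have hgk : g (n - k) = 2 * k := by
      simp only [hgdef]
      rw [if_neg (by omega)]
      omega
    have hgeo : ∀ 𝓕 ∈ C, ∀ 𝓕' ∈ C, 𝓕 ≠ 𝓕' → (𝓕 aβ) ⊔ (𝓕' aβ) = ⊤ := by
      intro 𝓕 h𝓕 𝓕' h𝓕' hne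
      have heq := hflagdist 𝓕 h𝓕 𝓕' h𝓕' hne aβ
      have h1 : finrank F (𝓕 aβ) = n - k := (hCflag 𝓕 h𝓕).1 aβ
      have h2 : finrank F (𝓕' aβ) = n - k := (hCflag 𝓕' h𝓕').1 aβ
      have hinf : finrank F ((𝓕 aβ) ⊓ (𝓕' aβ) : Submodule F (Fin n → F)) ≤ n - k := by
        rw [← h1]
        exact Submodule.finrank_mono inf_le_left
      have hsupinf := Submodule.finrank_sup_add_finrank_inf_eq (𝓕 aβ) (𝓕' aβ)
      rw [h1, h2] at hsupinf
      have hsuple : finrank F ((𝓕 aβ) ⊔ (𝓕' aβ) : Submodule F (Fin n → F)) ≤ n := by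
        have := Submodule.finrank_le ((𝓕 aβ) ⊔ (𝓕' aβ))
        rwa [hVrank] at this
      rw [subDist, h1, h2] at heq
      have hsup : finrank F ((𝓕 aβ) ⊔ (𝓕' aβ) : Submodule F (Fin n → F)) = n := by
        have : g (aβ : ℕ) = 2 * k := hgk
        omega
      exact Submodule.eq_top_of_finrank_eq (by rw [hsup, hVrank])
    haveI : Finite (Module.Dual F (Fin n → F)) :=
      Finite.of_injective (fun φ => (φ : (Fin n → F) → F)) DFunLike.coe_injective
    have hDrank : finrank F (Module.Dual F (Fin n → F)) = n := by
      rw [Subspace.dual_finrank_eq, hVrank]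
    set gmap : (A → Submodule F (Fin n → F)) → Submodule F (Module.Dual F (Fin n → F)) :=
      fun 𝓕 => (𝓕 aβ).dualAnnihilator with hgmap
    have hdimann : ∀ 𝓕 ∈ C, finrank F ((𝓕 aβ).dualAnnihilator) = k := by
      intro 𝓕 h𝓕
      have h1 : finrank F (𝓕 aβ) = n - k := (hCflag 𝓕 h𝓕).1 aβ
      have h2 := finrank_dualAnnihilator_aux (𝓕 aβ)
      rw [h1, hVrank] at h2
      omega
    have hdisjann : ∀ 𝓕 ∈ C, ∀ 𝓕' ∈ C, 𝓕 ≠ 𝓕' →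
        (𝓕 aβ).dualAnnihilator ⊓ (𝓕' aβ).dualAnnihilator = ⊥ := by
      intro 𝓕 h𝓕 𝓕' h𝓕' hne
      rw [← Submodule.dualAnnihilator_sup_eq, hgeo 𝓕 h𝓕 𝓕' h𝓕' hne,
        Submodule.dualAnnihilator_top]
    have hinj : Set.InjOn gmap C := by
      intro 𝓕 h𝓕 𝓕' h𝓕' heq
      by_contra hne
      have hbot := hdisjann 𝓕 h𝓕 𝓕' h𝓕' hne
      simp only [hgmap] at heq
      rw [heq, inf_idem] at hbot
      have h2 := hdimann 𝓕' h𝓕'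
      rw [hbot, finrank_bot] at h2
      omega
    set Sset := gmap '' C with hSset
    have hSfin : Sset.Finite := Set.toFinite _
    have hncard : (C.ncard : ℝ) = (hSfin.toFinset.card : ℝ) := by
      rw [← Set.ncard_image_of_injOn hinj, ← hSset, Set.ncard_eq_toFinset_card _ hSfin]
    rw [hncard]
    have hbound := spread_bound (V := Module.Dual F (Fin n → F)) q n k hq hDrank hk
      (le_of_lt h2k) (by omega) hSfin.toFinset
      (by
        obtain ⟨𝓕, h𝓕⟩ := hCne
        exact ⟨gmap 𝓕, by rw [Set.Finite.mem_toFinset]; exact ⟨𝓕, h𝓕, rfl⟩⟩)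
      (by
        intro W hW
        rw [Set.Finite.mem_toFinset] at hW
        obtain ⟨𝓕, h𝓕, rfl⟩ := hW
        exact hdimann 𝓕 h𝓕)
      (by
        intro W hW W' hW' hne
        rw [Set.Finite.mem_toFinset] at hW hW'
        obtain ⟨𝓕, h𝓕, rfl⟩ := hW
        obtain ⟨𝓕', h𝓕', rfl⟩ := hW'
        exact hdisjann 𝓕 h𝓕 𝓕' h𝓕' (fun h => hne (by rw [h])))
    exact hbound
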